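/- Let $L$ be an imaginary quadratic field of odd discriminant $D$, $B = \mathcal{O}_L$, and $p$ an odd prime ramified in $L$. Write $B_p = \mathbb{Z}_p[\pi]$ with $\bar{\pi} = -\pi$ and $\pi\bar{\pi} = p$. Let $h$ be an integral binary $B$-hermitian form on a free $B_p$-module of rank 2 with matrix $\begin{pmatrix} \alpha & \gamma \\ \bar{\gamma} & \beta \end{pmatrix}$, $\alpha, \beta \in \mathbb{Z}_p$, $\gamma = (a + b\pi)/\pi$ with $a \in \mathbb{Z}_p^\times$, $b \in \mathbb{Z}_p$. Then the $4 \times 4$ matrix of $h$ as a quadratic form over $\mathbb{Z}_p$ in coordinates $x = x_1 + x_2\pi$, $y = y_1 + y_2\pi$ has determinant congruent to $a^4/16$ modulo $p$; in particular the determinant is a $p$-adic unit and $h$ is $\mathbb{Z}_p$-equivalent to a unimodular diagonal form, hence represents 1 over $\mathbb{Z}_p$. -/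

import Mathlib

open Matrix Polynomial

namespace St17

variable {p : ℕ} [hpp : Fact p.Prime]

lemma p_nonunit : ¬ IsUnit ((p : ℤ_[p])) := by
  rw [PadicInt.isUnit_iff]
  exact ne_of_lt ((PadicInt.norm_lt_one_iff_dvd _).2 dvd_rfl)

lemma nonunit_add {x y : ℤ_[p]} (hx : ¬ IsUnit x) (hy : ¬ IsUnit y) : ¬ IsUnit (x + y) :=
  mem_nonunits_iff.1 (IsLocalRing.nonunits_add (mem_nonunits_iff.2 hx) (mem_nonunits_iff.2 hy))

lemma nonunit_mul_p (k : ℤ_[p]) : ¬ IsUnit ((p : ℤ_[p]) * k) :=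
  fun h => p_nonunit (isUnit_of_mul_isUnit_left h)

lemma unit_add_p_mul {u : ℤ_[p]} (hu : IsUnit u) (k : ℤ_[p]) :
    IsUnit (u + (p : ℤ_[p]) * k) := by
  by_contra h
  have h2 : ¬ IsUnit (-((p : ℤ_[p]) * k)) := by
    rw [IsUnit.neg_iff]; exact nonunit_mul_p k
  have h3 := nonunit_add h h2
  rw [add_neg_cancel_right] at h3
  exact h3 hu

lemma two_unit (hp : p ≠ 2) : IsUnit (2 : ℤ_[p]) := by
  rw [PadicInt.isUnit_iff]
  refine le_antisymm (PadicInt.norm_le_one _) (not_lt.1 ?_)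
  have h2 : ((2 : ℤ) : ℤ_[p]) = (2 : ℤ_[p]) := by norm_num
  rw [← h2, PadicInt.norm_int_lt_one_iff_dvd]
  intro hdvd
  have hd : p ∣ 2 := by exact_mod_cast hdvd
  exact hp ((Nat.prime_dvd_prime_iff_eq hpp.out Nat.prime_two).1 hd)

lemma exists_unit_entry (hp : p ≠ 2) {x y z : ℤ_[p]}
    (hdet : IsUnit (x * z - y * y)) :
    ∃ s : ℤ_[p], IsUnit (x + 2 * s * y + s * s * z) := by
  by_cases hx : IsUnit x
  · refine ⟨0, ?_⟩
    have e : x + 2 * 0 * y + 0 * 0 * z = x := by ring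
    rw [e]; exact hx
  by_cases h1 : IsUnit (x + 2 * y + z)
  · refine ⟨1, ?_⟩
    have e : x + 2 * 1 * y + 1 * 1 * z = x + 2 * y + z := by ring
    rw [e]; exact h1
  by_cases h2 : IsUnit (x - 2 * y + z)
  · refine ⟨-1, ?_⟩
    have e : x + 2 * (-1) * y + (-1) * (-1) * z = x - 2 * y + z := by ring
    rw [e]; exact h2
  exfalso
  have h4 : IsUnit (4 : ℤ_[p]) := by
    have := (two_unit hp).mul (two_unit hp)
    rwa [show (2 : ℤ_[p]) * 2 = 4 by norm_num] at this
  have hy : ¬ IsUnit y := by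
    intro h
    have hn := nonunit_add h1 (show ¬ IsUnit (-(x - 2 * y + z)) by
      rw [IsUnit.neg_iff]; exact h2)
    rw [show (x + 2 * y + z) + -(x - 2 * y + z) = 4 * y by ring] at hn
    exact hn (h4.mul h)
  have hxz : ¬ IsUnit (x + z) := by
    intro h
    have hn := nonunit_add h1 h2
    rw [show (x + 2 * y + z) + (x - 2 * y + z) = 2 * (x + z) by ring] at hn
    exact hn ((two_unit hp).mul h)
  have hz : ¬ IsUnit z := by
    intro h
    have hn := nonunit_add hxz (show ¬ IsUnit (-x) by rw [IsUnit.neg_iff]; exact hx)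
    rw [show x + z + -x = z by ring] at hn
    exact hn h
  have hxz' : ¬ IsUnit (x * z) := fun h => hx (isUnit_of_mul_isUnit_left h)
  have hyy : ¬ IsUnit (-(y * y)) := by
    rw [IsUnit.neg_iff]; exact fun h => hy (isUnit_of_mul_isUnit_left h)
  have hn := nonunit_add hxz' hyy
  rw [show x * z + -(y * y) = x * z - y * y by ring] at hn
  exact hn hdet

lemma diag2' (hp : p ≠ 2) (x y z : ℤ_[p]) (hdet : IsUnit (x * z - y * y)) :
    ∃ (U : Matrix (Fin 2) (Fin 2) ℤ_[p]) (d : Fin 2 → ℤ_[p]),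
      IsUnit U.det ∧ (∀ i, IsUnit (d i)) ∧
      Uᵀ * !![x, y; y, z] * U = Matrix.diagonal d := by
  obtain ⟨s, hs⟩ := exists_unit_entry hp hdet
  obtain ⟨i, hi⟩ : ∃ i : ℤ_[p], i * (x + 2 * s * y + s * s * z) = 1 :=
    ⟨Ring.inverse _, Ring.inverse_mul_cancel _ hs⟩
  have hUt : (!![1, -(i * (y + s * z)); s, s * -(i * (y + s * z)) + 1])ᵀ =
      !![1, s; -(i * (y + s * z)), s * -(i * (y + s * z)) + 1] := by
    ext r j; fin_cases r <;> fin_cases j <;> rfl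
  refine ⟨!![1, -(i * (y + s * z)); s, s * -(i * (y + s * z)) + 1],
      ![x + 2 * s * y + s * s * z, i * (x * z - y * y)], ?_, ?_, ?_⟩
  · have hdU : (!![1, -(i * (y + s * z)); s, s * -(i * (y + s * z)) + 1]).det = 1 := by
      rw [Matrix.det_fin_two_of]; ring
    rw [hdU]; exact isUnit_one
  · intro j; fin_cases j
    · simpa using hs
    · simpa using (IsUnit.of_mul_eq_one (a := i) _ hi).mul hdet
  · rw [hUt]
    ext r j
    fin_cases r <;> fin_cases j <;>
      simp [Matrix.mul_apply, Fin.sum_univ_two, Matrix.diagonal] <;>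
      first
        | ring1
        | linear_combination (-(y + s * z)) * hi
        | linear_combination (y + s * z) * hi
        | linear_combination (i * (y + s * z) ^ 2 - z) * hi
        | linear_combination (-(i * (y + s * z) ^ 2) + z) * hi

lemma diag2 (hp : p ≠ 2) (N : Matrix (Fin 2) (Fin 2) ℤ_[p]) (hsym : Nᵀ = N)
    (hdet : IsUnit N.det) :
    ∃ (U : Matrix (Fin 2) (Fin 2) ℤ_[p]) (d : Fin 2 → ℤ_[p]),
      IsUnit U.det ∧ (∀ i, IsUnit (d i)) ∧ Uᵀ * N * U = Matrix.diagonal d := by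
  have h10 : N 1 0 = N 0 1 := by
    have := congrFun (congrFun hsym 0) 1
    rwa [Matrix.transpose_apply] at this
  have hNeta := Matrix.eta_fin_two N
  rw [h10] at hNeta
  have hdet2 : IsUnit (N 0 0 * N 1 1 - N 0 1 * N 0 1) := by
    rw [Matrix.det_fin_two, h10] at hdet; exact hdet
  obtain ⟨U, d, h1, h2, h3⟩ := diag2' hp (N 0 0) (N 0 1) (N 1 1) hdet2
  exact ⟨U, d, h1, h2, by rw [hNeta]; exact h3⟩

/-- the reindexing equiv grouping coordinates {0,3} and {1,2} -/
def pairEquiv : (Fin 2 ⊕ Fin 2) ≃ Fin 4 :=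
  ⟨Sum.elim ![0, 3] ![1, 2], ![Sum.inl 0, Sum.inr 0, Sum.inr 1, Sum.inl 1],
    by decide, by decide⟩

lemma rep_two_aux (hp : p ≠ 2) {d0 d1 : ℤ_[p]} (h0 : IsUnit d0) (h1 : IsUnit d1)
    (x0 y0 : ZMod p)
    (hxy : PadicInt.toZMod d0 * x0 ^ 2 + PadicInt.toZMod d1 * y0 ^ 2 = 1)
    (hx0 : x0 ≠ 0) : ∃ x y : ℤ_[p], d0 * x ^ 2 + d1 * y ^ 2 = 1 := by
  haveI : NeZero p := ⟨hpp.out.pos.ne'⟩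
  set x1 : ℤ_[p] := (x0.val : ℤ_[p]) with hx1def
  set y1 : ℤ_[p] := (y0.val : ℤ_[p]) with hy1def
  have hφx : PadicInt.toZMod x1 = x0 := by
    rw [hx1def, map_natCast, ZMod.natCast_val, ZMod.cast_id]
  have hφy : PadicInt.toZMod y1 = y0 := by
    rw [hy1def, map_natCast, ZMod.natCast_val, ZMod.cast_id]
  have hker : ∀ v : ℤ_[p], PadicInt.toZMod v = 0 → ‖v‖ < 1 := by
    intro v hv
    rw [PadicInt.norm_lt_one_iff_dvd, ← Ideal.mem_span_singleton,
      ← PadicInt.maximalIdeal_eq_span_p, ← PadicInt.ker_toZMod]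
    exact RingHom.mem_ker.mpr hv
  have hker' : ∀ v : ℤ_[p], ‖v‖ < 1 → PadicInt.toZMod v = 0 := by
    intro v hv
    rw [PadicInt.norm_lt_one_iff_dvd, ← Ideal.mem_span_singleton,
      ← PadicInt.maximalIdeal_eq_span_p, ← PadicInt.ker_toZMod] at hv
    exact RingHom.mem_ker.mp hv
  have hx1u : IsUnit x1 := by
    rw [PadicInt.isUnit_iff]
    refine le_antisymm (PadicInt.norm_le_one _) (not_lt.1 fun hlt => hx0 ?_)
    rw [← hφx]; exact hker' _ hlt
  set F : Polynomial ℤ_[p] := C d0 * X ^ 2 + C (d1 * y1 ^ 2 - 1) with hF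
  have hFeval : ∀ t : ℤ_[p], F.eval t = d0 * t ^ 2 + (d1 * y1 ^ 2 - 1) := by
    intro t; simp [hF]
  have hFd : F.derivative.eval x1 = 2 * (d0 * x1) := by
    rw [hF, derivative_add, derivative_C, add_zero, derivative_C_mul, derivative_X_pow]
    simp
    ring
  have hnorm1 : ‖F.derivative.eval x1‖ = 1 := by
    rw [hFd]
    exact PadicInt.isUnit_iff.1 ((two_unit hp).mul (h0.mul hx1u))
  have hlt : ‖F.eval x1‖ < 1 := by
    apply hker
    rw [hFeval]
    have : PadicInt.toZMod (d0 * x1 ^ 2 + (d1 * y1 ^ 2 - 1)) =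
        PadicInt.toZMod d0 * x0 ^ 2 + (PadicInt.toZMod d1 * y0 ^ 2 - 1) := by
      rw [← hφx, ← hφy]
      simp only [_root_.map_add, _root_.map_mul, _root_.map_sub, _root_.map_pow,
        _root_.map_one]
    rw [this]; linear_combination hxy
  obtain ⟨z, hz, -, -, -⟩ := hensels_lemma (F := F) (a := x1)
    (by rw [Polynomial.coe_aeval_eq_eval, hnorm1, one_pow]; exact hlt)
  refine ⟨z, y1, ?_⟩
  rw [Polynomial.coe_aeval_eq_eval, hFeval] at hz
  linear_combination hz

lemma rep_two (hp : p ≠ 2) {d0 d1 : ℤ_[p]} (h0 : IsUnit d0) (h1 : IsUnit d1) :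
    ∃ x y : ℤ_[p], d0 * x ^ 2 + d1 * y ^ 2 = 1 := by
  haveI : NeZero p := ⟨hpp.out.pos.ne'⟩
  classical
  have hodd : Fintype.card (ZMod p) % 2 = 1 := by
    rw [ZMod.card]; exact Nat.odd_iff.1 (hpp.out.odd_of_ne_two hp)
  have hφ0 : PadicInt.toZMod d0 ≠ 0 := (h0.map PadicInt.toZMod).ne_zero
  have hφ1 : PadicInt.toZMod d1 ≠ 0 := (h1.map PadicInt.toZMod).ne_zero
  obtain ⟨A, B, hAB⟩ := FiniteField.exists_root_sum_quadratic
    (f := C (PadicInt.toZMod d0) * X ^ 2)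
    (g := C (PadicInt.toZMod d1) * X ^ 2 - C 1)
    (by rw [Polynomial.degree_C_mul_X_pow 2 hφ0]; rfl)
    (by
      have hdg : (C (PadicInt.toZMod d1) * X ^ 2 : (ZMod p)[X]).degree = 2 := by
        rw [Polynomial.degree_C_mul_X_pow 2 hφ1]; rfl
      have hlt' : (-(C 1) : (ZMod p)[X]).degree <
          (C (PadicInt.toZMod d1) * X ^ 2 : (ZMod p)[X]).degree := by
        rw [Polynomial.degree_neg, hdg]
        exact lt_of_le_of_lt Polynomial.degree_C_le (by decide)
      rw [sub_eq_add_neg, Polynomial.degree_add_eq_left_of_degree_lt hlt', hdg])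
    hodd
  simp only [eval_add, eval_sub, eval_mul, eval_pow, eval_C, eval_X, eval_one] at hAB
  have hAB' : PadicInt.toZMod d0 * A ^ 2 + PadicInt.toZMod d1 * B ^ 2 = 1 := by
    linear_combination hAB
  by_cases hA : A = 0
  · have hB : B ≠ 0 := by
      intro h
      rw [hA, h] at hAB'
      simp at hAB'
    obtain ⟨y, x, hyx⟩ := rep_two_aux hp h1 h0 B A (by linear_combination hAB') hB
    exact ⟨x, y, by linear_combination hyx⟩
  · exact rep_two_aux hp h0 h1 A B hAB' hA

theorem aux (hp : p ≠ 2) (α β a b c : ℤ_[p]) (ha : IsUnit a)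
    (hc : (2 : ℤ_[p]) * c = 1) (M : Matrix (Fin 4) (Fin 4) ℤ_[p])
    (hM : M = !![α, 0, b * c, a * c;
         0, α * p, a * c, (p : ℤ_[p]) * b * c;
         b * c, a * c, β, 0;
         a * c, (p : ℤ_[p]) * b * c, 0, β * p]) :
    (∃ k : ℤ_[p], M.det = a ^ 4 * c ^ 4 + (p : ℤ_[p]) * k) ∧
    IsUnit M.det ∧
    (∃ (U : Matrix (Fin 4) (Fin 4) ℤ_[p]) (d : Fin 4 → ℤ_[p]),
      IsUnit U.det ∧ (∀ i, IsUnit (d i)) ∧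
      U.transpose * M * U = Matrix.diagonal d) ∧
    (∃ z : Fin 4 → ℤ_[p], dotProduct z (M.mulVec z) = 1) := by
  have hcu : IsUnit c := IsUnit.of_mul_eq_one (a := c) 2 (by rw [mul_comm]; exact hc)
  have hdetval : M.det = a ^ 4 * c ^ 4 + (p : ℤ_[p]) *
      (b ^ 4 * c ^ 4 * (p : ℤ_[p]) - 2 * a ^ 2 * b ^ 2 * c ^ 4
        - 2 * α * β * b ^ 2 * c ^ 2 * (p : ℤ_[p]) - 2 * α * β * a ^ 2 * c ^ 2
        + α ^ 2 * β ^ 2 * (p : ℤ_[p])) := by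
    rw [hM]
    simp [Matrix.det_succ_row_zero, Fin.sum_univ_succ, Fin.succAbove,
      Fin.castSucc, Fin.castAdd, Fin.castLE]
    ring
  have hdet : IsUnit M.det := by
    rw [hdetval]
    exact unit_add_p_mul ((ha.pow 4).mul (hcu.pow 4)) _
  -- block decomposition
  obtain ⟨P, hPdef⟩ : ∃ P : Matrix (Fin 2) (Fin 2) ℤ_[p],
      P = !![α, a * c; a * c, β * p] := ⟨_, rfl⟩
  obtain ⟨Q, hQdef⟩ : ∃ Q : Matrix (Fin 2) (Fin 2) ℤ_[p],
      Q = !![α * p, a * c; a * c, β] := ⟨_, rfl⟩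
  obtain ⟨R, hRdef⟩ : ∃ R : Matrix (Fin 2) (Fin 2) ℤ_[p],
      R = !![0, b * c; (p : ℤ_[p]) * b * c, 0] := ⟨_, rfl⟩
  have hRt : Rᵀ = !![0, (p : ℤ_[p]) * b * c; b * c, 0] := by
    rw [hRdef]; ext i j; fin_cases i <;> fin_cases j <;> rfl
  have hM' : M.submatrix pairEquiv pairEquiv = Matrix.fromBlocks P R Rᵀ Q := by
    rw [hM, hPdef, hQdef, hRt, hRdef]
    ext i j
    rcases i with i | i <;> rcases j with j | j <;> fin_cases i <;> fin_cases j <;>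
      simp [pairEquiv, Matrix.fromBlocks]
  have hPsym : Pᵀ = P := by
    rw [hPdef]; ext i j; fin_cases i <;> fin_cases j <;> rfl
  have hQsym : Qᵀ = Q := by
    rw [hQdef]; ext i j; fin_cases i <;> fin_cases j <;> rfl
  have hPdet : IsUnit P.det := by
    have e : P.det = -(a * c * (a * c)) + (p : ℤ_[p]) * (α * β) := by
      rw [hPdef, Matrix.det_fin_two_of]; ring
    rw [e]
    exact unit_add_p_mul ((ha.mul hcu).mul (ha.mul hcu)).neg _
  have hPinv : P * P⁻¹ = 1 := Matrix.mul_nonsing_inv P hPdet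
  have hPinv' : P⁻¹ * P = 1 := Matrix.nonsing_inv_mul P hPdet
  obtain ⟨S, hSdef⟩ : ∃ S : Matrix (Fin 2) (Fin 2) ℤ_[p],
      S = Q - Rᵀ * P⁻¹ * R := ⟨_, rfl⟩
  have hW : (-(P⁻¹ * R))ᵀ = -(Rᵀ * P⁻¹) := by
    rw [Matrix.transpose_neg, Matrix.transpose_mul, Matrix.transpose_nonsing_inv, hPsym]
  have hbl : (-(P⁻¹ * R))ᵀ * P + Rᵀ * 1 = 0 := by
    rw [Matrix.mul_one, hW, Matrix.neg_mul, Matrix.mul_assoc, hPinv', Matrix.mul_one,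
      neg_add_cancel]
  have hb1 : P * -(P⁻¹ * R) + R * 1 = 0 := by
    rw [Matrix.mul_one, Matrix.mul_neg, ← Matrix.mul_assoc, hPinv, Matrix.one_mul,
      neg_add_cancel]
  have hS : (-(P⁻¹ * R))ᵀ * R + 1 * Q = S := by
    rw [Matrix.one_mul, hW, Matrix.neg_mul, neg_add_eq_sub]
    exact hSdef.symm
  have key : (Matrix.fromBlocks 1 (-(P⁻¹ * R)) 0 1)ᵀ * Matrix.fromBlocks P R Rᵀ Q *
      Matrix.fromBlocks 1 (-(P⁻¹ * R)) 0 1 = Matrix.fromBlocks P 0 0 S := by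
    rw [Matrix.fromBlocks_transpose, Matrix.transpose_one, Matrix.transpose_zero,
      Matrix.fromBlocks_multiply, Matrix.fromBlocks_multiply]
    simp only [Matrix.one_mul, Matrix.mul_one, Matrix.zero_mul, Matrix.mul_zero,
      add_zero, zero_add]
    rw [show (-(P⁻¹ * R))ᵀ * P + Rᵀ = 0 by
        have := hbl; rwa [Matrix.mul_one] at this,
      show P * -(P⁻¹ * R) + R = 0 by
        have := hb1; rwa [Matrix.mul_one] at this,
      show (-(P⁻¹ * R))ᵀ * R + Q = S by
        have := hS; rwa [Matrix.one_mul] at this]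
    simp only [Matrix.zero_mul, zero_add]
  have hv1 : (Matrix.fromBlocks (1 : Matrix (Fin 2) (Fin 2) ℤ_[p]) (-(P⁻¹ * R)) 0 1).det
      = 1 := by
    rw [Matrix.det_fromBlocks_zero₂₁]; simp
  have hSsym : Sᵀ = S := by
    rw [hSdef, Matrix.transpose_sub, hQsym, Matrix.transpose_mul, Matrix.transpose_mul,
      Matrix.transpose_transpose, Matrix.transpose_nonsing_inv, hPsym, ← Matrix.mul_assoc]
  have hSdet : IsUnit S.det := by
    have h2 : P.det * S.det = M.det := by
      calc P.det * S.det = (Matrix.fromBlocks P 0 0 S).det :=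
            (Matrix.det_fromBlocks_zero₂₁ _ _ _).symm
        _ = ((Matrix.fromBlocks 1 (-(P⁻¹ * R)) 0 1)ᵀ * Matrix.fromBlocks P R Rᵀ Q *
              Matrix.fromBlocks 1 (-(P⁻¹ * R)) 0 1).det := by rw [key]
        _ = (Matrix.fromBlocks P R Rᵀ Q).det := by
              rw [Matrix.det_mul, Matrix.det_mul, Matrix.det_transpose, hv1, one_mul,
                mul_one]
        _ = (M.submatrix pairEquiv pairEquiv).det := by rw [hM']
        _ = M.det := Matrix.det_submatrix_equiv_self pairEquiv M
    exact isUnit_of_mul_isUnit_right (h2 ▸ hdet : IsUnit (P.det * S.det))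
  obtain ⟨UP, dP, hUP, hdP, hUPeq⟩ := diag2 hp P hPsym hPdet
  obtain ⟨US, dS, hUS, hdS, hUSeq⟩ := diag2 hp S hSsym hSdet
  have key2 : (Matrix.fromBlocks UP 0 0 US)ᵀ * Matrix.fromBlocks P 0 0 S *
      Matrix.fromBlocks UP 0 0 US =
      Matrix.diagonal (Sum.elim dP dS) := by
    rw [Matrix.fromBlocks_transpose, Matrix.transpose_zero,
      Matrix.fromBlocks_multiply, Matrix.fromBlocks_multiply]
    simp only [Matrix.zero_mul, Matrix.mul_zero, add_zero, zero_add]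
    rw [hUPeq, hUSeq, Matrix.fromBlocks_diagonal]
  have hVcong : ((Matrix.fromBlocks 1 (-(P⁻¹ * R)) 0 1) * Matrix.fromBlocks UP 0 0 US)ᵀ *
      (M.submatrix pairEquiv pairEquiv) *
      ((Matrix.fromBlocks 1 (-(P⁻¹ * R)) 0 1) * Matrix.fromBlocks UP 0 0 US) =
      Matrix.diagonal (Sum.elim dP dS) := by
    rw [hM', Matrix.transpose_mul]
    calc (Matrix.fromBlocks UP 0 0 US)ᵀ * (Matrix.fromBlocks 1 (-(P⁻¹ * R)) 0 1)ᵀ *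
          Matrix.fromBlocks P R Rᵀ Q *
          ((Matrix.fromBlocks 1 (-(P⁻¹ * R)) 0 1) * Matrix.fromBlocks UP 0 0 US)
        = (Matrix.fromBlocks UP 0 0 US)ᵀ *
            ((Matrix.fromBlocks 1 (-(P⁻¹ * R)) 0 1)ᵀ * Matrix.fromBlocks P R Rᵀ Q *
              Matrix.fromBlocks 1 (-(P⁻¹ * R)) 0 1) *
            Matrix.fromBlocks UP 0 0 US := by
          simp only [Matrix.mul_assoc]
      _ = Matrix.diagonal (Sum.elim dP dS) := by rw [key]; exact key2
  have hpart3 : ∃ (U : Matrix (Fin 4) (Fin 4) ℤ_[p]) (d : Fin 4 → ℤ_[p]),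
      IsUnit U.det ∧ (∀ i, IsUnit (d i)) ∧
      U.transpose * M * U = Matrix.diagonal d := by
    refine ⟨((Matrix.fromBlocks 1 (-(P⁻¹ * R)) 0 1) *
        Matrix.fromBlocks UP 0 0 US).submatrix pairEquiv.symm pairEquiv.symm,
      Sum.elim dP dS ∘ pairEquiv.symm, ?_, ?_, ?_⟩
    · rw [Matrix.det_submatrix_equiv_self, Matrix.det_mul, hv1, one_mul,
        Matrix.det_fromBlocks_zero₂₁]
      exact hUP.mul hUS
    · intro i
      rcases h : pairEquiv.symm i with j | j
      · simpa [h] using hdP j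
      · simpa [h] using hdS j
    · rw [Matrix.transpose_submatrix]
      conv_lhs =>
        rw [show M = (M.submatrix pairEquiv pairEquiv).submatrix
            pairEquiv.symm pairEquiv.symm by
          rw [Matrix.submatrix_submatrix, Equiv.self_comp_symm, Matrix.submatrix_id_id]]
      rw [Matrix.submatrix_mul_equiv, Matrix.submatrix_mul_equiv, hVcong,
        Matrix.submatrix_diagonal_equiv]
  refine ⟨⟨_, hdetval⟩, hdet, hpart3, ?_⟩
  obtain ⟨U, d, hU, hd, hcong⟩ := hpart3
  obtain ⟨x, y, hxy⟩ := rep_two hp (hd 0) (hd 1)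
  have hw : dotProduct ![x, y, 0, 0] (Matrix.diagonal d *ᵥ ![x, y, 0, 0]) = 1 := by
    simp [dotProduct, Matrix.mulVec, Fin.sum_univ_four, Matrix.diagonal]
    linear_combination hxy
  refine ⟨U *ᵥ ![x, y, 0, 0], ?_⟩
  calc (U *ᵥ ![x, y, 0, 0]) ⬝ᵥ M *ᵥ (U *ᵥ ![x, y, 0, 0])
      = (U *ᵥ ![x, y, 0, 0]) ⬝ᵥ (M * U) *ᵥ ![x, y, 0, 0] := by
        rw [Matrix.mulVec_mulVec]
    _ = (![x, y, 0, 0] ᵥ* Uᵀ) ⬝ᵥ (M * U) *ᵥ ![x, y, 0, 0] := by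
        rw [Matrix.vecMul_transpose]
    _ = ![x, y, 0, 0] ⬝ᵥ Uᵀ *ᵥ ((M * U) *ᵥ ![x, y, 0, 0]) :=
        (Matrix.dotProduct_mulVec _ _ _).symm
    _ = ![x, y, 0, 0] ⬝ᵥ (Uᵀ * (M * U)) *ᵥ ![x, y, 0, 0] := by
        rw [Matrix.mulVec_mulVec]
    _ = ![x, y, 0, 0] ⬝ᵥ Matrix.diagonal d *ᵥ ![x, y, 0, 0] := by
        rw [← Matrix.mul_assoc, hcong]
    _ = 1 := hw

end St17

theorem statement17
    (p : ℕ) [Fact p.Prime] (hp : p ≠ 2)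
    (α β a b : ℤ_[p]) (ha : IsUnit a) :
    let c : ℤ_[p] := Ring.inverse 2
    let M : Matrix (Fin 4) (Fin 4) ℤ_[p] :=
      !![α, 0, b * c, a * c;
         0, α * p, a * c, (p : ℤ_[p]) * b * c;
         b * c, a * c, β, 0;
         a * c, (p : ℤ_[p]) * b * c, 0, β * p]
    -- the determinant is `a⁴/16` modulo `p`
    (∃ k : ℤ_[p], M.det = a ^ 4 * c ^ 4 + (p : ℤ_[p]) * k) ∧
    -- in particular it is a `p`-adic unit
    IsUnit M.det ∧
    -- the form is `ℤ_p`-equivalent to a unimodular diagonal form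
    (∃ (U : Matrix (Fin 4) (Fin 4) ℤ_[p]) (d : Fin 4 → ℤ_[p]),
      IsUnit U.det ∧ (∀ i, IsUnit (d i)) ∧
      U.transpose * M * U = Matrix.diagonal d) ∧
    -- and it represents `1` over `ℤ_p`
    (∃ z : Fin 4 → ℤ_[p], dotProduct z (M.mulVec z) = 1) := by
  intro c M
  exact St17.aux hp α β a b c ha
    (Ring.mul_inverse_cancel 2 (St17.two_unit hp)) M rfl
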